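/- Let A1, ..., A_{n+1} be affinely independent points in ℝ^n, none equal, and let F be a point distinct from all A_i minimizing the function f(P) = Σ_i dist(P, A_i). Then F is a fixed point of the Weiszfeld map, i.e., F = (Σ_i A_i / dist(F, A_i)) / (Σ_i 1/dist(F, A_i)). -/

import Mathlib

open scoped RealInnerProductSpace

private lemma hasFDerivAt_norm_sub {E : Type*} [NormedAddCommGroup E]
    [InnerProductSpace ℝ E] (a x : E) (hx : x ≠ a) :
    HasFDerivAt (fun y => ‖y - a‖) (‖x - a‖⁻¹ • innerSL ℝ (x - a)) x := by
  have h1 : HasFDerivAt (fun y : E => ‖y - a‖ ^ 2) (2 • innerSL ℝ (x - a)) x := by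
    simpa using ((hasFDerivAt_id x).sub_const a).norm_sq
  have hne : ‖x - a‖ ^ 2 ≠ 0 := by
    simpa [sub_eq_zero] using hx
  have h2 : HasFDerivAt (fun y : E => Real.sqrt (‖y - a‖ ^ 2))
      ((1 / (2 * Real.sqrt (‖x - a‖ ^ 2))) • (2 • innerSL ℝ (x - a))) x :=
    (Real.hasDerivAt_sqrt hne).comp_hasFDerivAt x h1
  have hsqrt : ∀ y : E, Real.sqrt (‖y - a‖ ^ 2) = ‖y - a‖ := fun y =>
    Real.sqrt_sq (norm_nonneg _)
  have hx' : ‖x - a‖ ≠ 0 := by simpa [sub_eq_zero] using hx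
  convert h2 using 1
  · funext y; rw [hsqrt]
  · rw [hsqrt x]
    ext v
    simp only [ContinuousLinearMap.smul_apply, smul_eq_mul, two_smul,
      ContinuousLinearMap.add_apply]
    field_simp
    ring

/-- A minimizer of `P ↦ ∑ dist P Aᵢ` that is not a vertex is a fixed point of
the Weiszfeld map. -/
theorem fermat_point_weiszfeld_fixed (n : ℕ) (hn : 1 < n)
    (A : Fin (n + 1) → EuclideanSpace ℝ (Fin n)) (hA : AffineIndependent ℝ A)
    (F : EuclideanSpace ℝ (Fin n)) (hF : ∀ i, F ≠ A i)
    (hmin : ∀ Q : EuclideanSpace ℝ (Fin n),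
      ∑ i, dist F (A i) ≤ ∑ i, dist Q (A i)) :
    F = (∑ i, (dist F (A i))⁻¹)⁻¹ • ∑ i, (dist F (A i))⁻¹ • A i := by
  set d : Fin (n + 1) → ℝ := fun i => dist F (A i) with hd
  have hdpos : ∀ i, 0 < d i := fun i => dist_pos.2 (hF i)
  -- the sum function has derivative 0 at F
  have hder : HasFDerivAt (fun P : EuclideanSpace ℝ (Fin n) => ∑ i, dist P (A i))
      (∑ i, (d i)⁻¹ • innerSL ℝ (F - A i)) F := by
    have : ∀ i ∈ Finset.univ, HasFDerivAt (fun P : EuclideanSpace ℝ (Fin n) => dist P (A i))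
        ((d i)⁻¹ • innerSL ℝ (F - A i)) F := by
      intro i _
      rw [hd]
      simpa [dist_eq_norm] using hasFDerivAt_norm_sub (A i) F (hF i)
    simpa using HasFDerivAt.fun_sum this
  have hloc : IsLocalMin (fun P : EuclideanSpace ℝ (Fin n) => ∑ i, dist P (A i)) F :=
    Filter.Eventually.of_forall hmin
  have hzero := hloc.hasFDerivAt_eq_zero hder
  -- deduce the vector equation
  set w : EuclideanSpace ℝ (Fin n) := ∑ i, (d i)⁻¹ • (F - A i) with hw
  have hw0 : w = 0 := by
    have hinner : ⟪w, w⟫ = 0 := by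
      have h := ContinuousLinearMap.ext_iff.mp hzero w
      simp only [ContinuousLinearMap.sum_apply, ContinuousLinearMap.smul_apply,
        innerSL_apply_apply, smul_eq_mul, ContinuousLinearMap.zero_apply] at h
      rw [hw, sum_inner]
      simp only [real_inner_smul_left]
      exact h
    exact inner_self_eq_zero.mp hinner
  have hs : (∑ i, (d i)⁻¹) • F = ∑ i, (d i)⁻¹ • A i := by
    have : (∑ i, (d i)⁻¹) • F - ∑ i, (d i)⁻¹ • A i = w := by
      rw [hw, Finset.sum_smul, ← Finset.sum_sub_distrib]
      congr 1; funext i; rw [smul_sub]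
    rw [hw0] at this
    exact sub_eq_zero.mp this
  have hspos : 0 < ∑ i, (d i)⁻¹ :=
    Finset.sum_pos (fun i _ => inv_pos.2 (hdpos i)) Finset.univ_nonempty
  rw [← hs, inv_smul_smul₀ hspos.ne']
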